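/- arXiv:2105.07513 — 4 statements merged into one kernel-verified Lean document; each statement's English description precedes it below -/
import Mathlib

section
/- Let X be a random variable of the form X = x + η where η has the Laplace distribution with location 0 and scale λ > 0, and let ℓ < x be a real number. Then the expectation of max(ℓ, X) equals x + (λ/2)·exp((ℓ − x)/λ). -/
open Real MeasureTheory Set Filter Topology

private lemma intOn_Iic_of_neg_aux {f : ℝ → ℝ} {c : ℝ}
    (h : IntegrableOn (fun t => f (-t)) (Ioi (-c))) : IntegrableOn f (Iic c) := by
  have m : MeasurableEmbedding (Neg.neg : ℝ → ℝ) := (Homeomorph.neg ℝ).measurableEmbedding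
  rw [show (volume : Measure ℝ) = Measure.map Neg.neg volume from
      (Measure.map_neg_eq_self _).symm, m.integrableOn_map_iff]
  simp_rw [Function.comp_def, neg_preimage, neg_Iic]
  exact (integrableOn_Ici_iff_integrableOn_Ioi).mpr h

private lemma exp_div_intOn_Iic_aux (lam c : ℝ) (hlam : 0 < lam) :
    IntegrableOn (fun t : ℝ => exp (t / lam)) (Iic c) := by
  apply intOn_Iic_of_neg_aux
  have := (exp_neg_integrableOn_Ioi (-c) (show (0:ℝ) < 1/lam by positivity))
  refine this.congr_fun (fun t _ => ?_) measurableSet_Ioi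
  beta_reduce
  rw [show -(1/lam) * t = -t/lam by ring]

private lemma tendsto_exp_neg_div_aux (lam : ℝ) (hlam : 0 < lam) :
    Tendsto (fun t : ℝ => exp (-t/lam)) atTop (𝓝 0) := by
  have h2 : Tendsto (fun t : ℝ => -t/lam) atTop atBot :=
    (tendsto_neg_atTop_atBot.comp tendsto_id).atBot_div_const hlam
  exact tendsto_exp_atBot.comp h2

private lemma tendsto_mul_exp_neg_div_aux (lam : ℝ) (hlam : 0 < lam) :
    Tendsto (fun t : ℝ => t * exp (-t/lam)) atTop (𝓝 0) := by
  have h1 : Tendsto (fun u : ℝ => u * exp (-u)) atTop (𝓝 0) := by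
    simpa using tendsto_pow_mul_exp_neg_atTop_nhds_zero 1
  have h2 : Tendsto (fun t : ℝ => t / lam) atTop atTop := tendsto_id.atTop_div_const hlam
  have h3 := (h1.comp h2).const_mul lam
  rw [mul_zero] at h3
  refine h3.congr fun t => ?_
  simp only [Function.comp_apply]
  rw [show -(t/lam) = -t/lam by ring]
  field_simp

theorem clipped_laplace_expectation
    (lam x ℓ : ℝ) (hlam : 0 < lam) (hℓ : ℓ < x) :
    ∫ t : ℝ, max ℓ (x + t) * ((1 / (2 * lam)) * Real.exp (-|t| / lam)) =
      x + (lam / 2) * Real.exp ((ℓ - x) / lam) := by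
  have hlam' : lam ≠ 0 := ne_of_gt hlam
  set c : ℝ := ℓ - x with hc
  have hc0 : c < 0 := by simp [hc]; linarith
  set f : ℝ → ℝ := fun t => max ℓ (x + t) * ((1 / (2 * lam)) * Real.exp (-|t| / lam)) with hf
  set g1 : ℝ → ℝ := fun t => ℓ * ((1 / (2 * lam)) * exp (t / lam)) with hg1
  set g2 : ℝ → ℝ := fun t => (x + t) * ((1 / (2 * lam)) * exp (t / lam)) with hg2
  set g3 : ℝ → ℝ := fun t => (x + t) * ((1 / (2 * lam)) * exp (-t / lam)) with hg3
  -- pointwise identifications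
  have e1 : EqOn f g1 (Iic c) := by
    intro t ht
    simp only [mem_Iic] at ht
    have ht0 : t ≤ 0 := le_of_lt (lt_of_le_of_lt ht hc0)
    simp only [hf, hg1, abs_of_nonpos ht0, neg_neg,
      max_eq_left (show x + t ≤ ℓ by simp [hc] at ht; linarith)]
  have e2 : EqOn f g2 (Ioc c 0) := by
    intro t ht
    obtain ⟨ht1, ht2⟩ := ht
    simp only [hf, hg2, abs_of_nonpos ht2, neg_neg,
      max_eq_right (show ℓ ≤ x + t by simp [hc] at ht1; linarith)]
  have e3 : EqOn f g3 (Ioi 0) := by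
    intro t ht
    simp only [mem_Ioi] at ht
    have : c < t := lt_trans hc0 ht
    simp only [hf, hg3, abs_of_pos ht,
      max_eq_right (show ℓ ≤ x + t by simp [hc] at this; linarith)]
  -- derivatives
  have hd1 : ∀ t : ℝ, HasDerivAt (fun t => (ℓ/2) * exp (t/lam)) (g1 t) t := by
    intro t
    have := (((hasDerivAt_id t).div_const lam).exp).const_mul (ℓ/2)
    refine this.congr_deriv ?_
    simp [hg1]; ring
  have hd2 : ∀ t : ℝ, HasDerivAt (fun t => (1/2) * (x + t - lam) * exp (t/lam)) (g2 t) t := by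
    intro t
    have := ((((hasDerivAt_id t).const_add x).sub_const lam).const_mul (1/2 : ℝ)).mul
      (((hasDerivAt_id t).div_const lam).exp)
    refine this.congr_deriv ?_
    simp [hg2]
    field_simp
    ring
  have hd3 : ∀ t : ℝ, HasDerivAt (fun t => -(1/2) * (x + t + lam) * exp (-t/lam)) (g3 t) t := by
    intro t
    have := ((((hasDerivAt_id t).const_add x).add_const lam).const_mul (-(1/2) : ℝ)).mul
      (((hasDerivAt_id t).neg.div_const lam).exp)
    refine this.congr_deriv ?_
    simp [hg3]
    field_simp
    ring
  have hdK : ∀ t : ℝ, HasDerivAt (fun t => -(1/2) * (t + lam) * exp (-t/lam))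
      (t * ((1 / (2 * lam)) * exp (-t/lam))) t := by
    intro t
    have := (((hasDerivAt_id t).add_const lam).const_mul (-(1/2) : ℝ)).mul
      (((hasDerivAt_id t).neg.div_const lam).exp)
    refine this.congr_deriv ?_
    simp only [id, Pi.neg_apply]
    field_simp
    ring
  -- integrability
  have hint1 : IntegrableOn g1 (Iic c) := by
    refine IntegrableOn.congr_fun ((exp_div_intOn_Iic_aux lam c hlam).const_mul (ℓ / (2*lam)))
      (fun t _ => ?_) measurableSet_Iic
    simp only [hg1]; ring
  have hint3 : IntegrableOn g3 (Ioi 0) := by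
    have ha : IntegrableOn (fun t : ℝ => x * ((1 / (2 * lam)) * exp (-t/lam))) (Ioi 0) := by
      refine IntegrableOn.congr_fun ((exp_neg_integrableOn_Ioi 0
        (show (0:ℝ) < 1/lam by positivity)).const_mul (x / (2*lam)))
        (fun t _ => ?_) measurableSet_Ioi
      rw [show -(1/lam) * t = -t/lam by ring]; ring
    have hb : IntegrableOn (fun t : ℝ => t * ((1 / (2 * lam)) * exp (-t/lam))) (Ioi 0) := by
      refine integrableOn_Ioi_deriv_of_nonneg' (l := 0) (fun t _ => hdK t) (fun t ht => ?_) ?_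
      · have : (0:ℝ) < t := ht
        positivity
      · have h1 := ((tendsto_exp_neg_div_aux lam hlam).const_mul lam).add
          (tendsto_mul_exp_neg_div_aux lam hlam)
        have h2 := h1.const_mul (-(1/2) : ℝ)
        norm_num at h2
        refine h2.congr fun t => by ring
    refine IntegrableOn.congr_fun (ha.add hb) (fun t _ => ?_) measurableSet_Ioi
    simp only [hg3, Pi.add_apply]; ring
  have hintf1 : IntegrableOn f (Iic c) :=
    hint1.congr_fun (fun t ht => (e1 ht).symm) measurableSet_Iic
  have hintf3 : IntegrableOn f (Ioi 0) :=
    hint3.congr_fun (fun t ht => (e3 ht).symm) measurableSet_Ioi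
  have hcontf : Continuous f := by
    apply Continuous.mul
    · exact (continuous_const.max (continuous_const.add continuous_id))
    · exact continuous_const.mul ((continuous_abs.neg.div_const lam).rexp)
  have hintf2 : IntegrableOn f (Ioc c 0) :=
    (hcontf.integrableOn_Icc).mono_set Ioc_subset_Icc_self
  have hintfIoi : IntegrableOn f (Ioi c) := by
    rw [← Ioc_union_Ioi_eq_Ioi hc0.le]
    exact hintf2.union hintf3
  -- split the integral
  have hsplit : ∫ t : ℝ, f t = (∫ t in Iic c, f t) + ((∫ t in Ioc c 0, f t) + ∫ t in Ioi 0, f t) := by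
    rw [← intervalIntegral.integral_Iic_add_Ioi hintf1 hintfIoi]
    congr 1
    rw [← Ioc_union_Ioi_eq_Ioi hc0.le,
      setIntegral_union (Ioc_disjoint_Ioi le_rfl) measurableSet_Ioi hintf2 hintf3]
  -- compute each piece
  have hI1 : ∫ t in Iic c, f t = (ℓ/2) * exp (c/lam) := by
    rw [setIntegral_congr_fun measurableSet_Iic e1]
    have hbot : Tendsto (fun t : ℝ => (ℓ/2) * exp (t/lam)) atBot (𝓝 ((ℓ/2) * 0)) := by
      refine Tendsto.const_mul _ (tendsto_exp_atBot.comp ?_)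
      exact (tendsto_id (α := ℝ)).atBot_div_const hlam
    rw [mul_zero] at hbot
    have := integral_Iic_of_hasDerivAt_of_tendsto' (fun t _ => hd1 t) hint1 hbot
    rw [this, sub_zero]
  have hI2 : ∫ t in Ioc c 0, f t
      = (1/2) * (x - lam) - (1/2) * (x + c - lam) * exp (c/lam) := by
    rw [setIntegral_congr_fun measurableSet_Ioc e2, ← intervalIntegral.integral_of_le hc0.le]
    have := intervalIntegral.integral_eq_sub_of_hasDerivAt (a := c) (b := (0:ℝ)) (f := fun t => (1/2) * (x + t - lam) * exp (t/lam))
      (fun t _ => hd2 t) ?_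
    · rw [this]
      norm_num
    · apply Continuous.intervalIntegrable
      simp only [hg2]
      exact (continuous_const.add continuous_id).mul
        (continuous_const.mul ((continuous_id.div_const lam).rexp))
  have hI3 : ∫ t in Ioi 0, f t = (1/2) * (x + lam) := by
    rw [setIntegral_congr_fun measurableSet_Ioi e3]
    have htop : Tendsto (fun t : ℝ => -(1/2) * (x + t + lam) * exp (-t/lam)) atTop (𝓝 0) := by
      have h1 := ((tendsto_exp_neg_div_aux lam hlam).const_mul (x + lam)).add
        (tendsto_mul_exp_neg_div_aux lam hlam)
      have h2 := h1.const_mul (-(1/2) : ℝ)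
      norm_num at h2
      refine h2.congr fun t => by ring
    have := integral_Ioi_of_hasDerivAt_of_tendsto' (fun t _ => hd3 t) hint3 htop
    rw [this]
    norm_num
  rw [hsplit, hI1, hI2, hI3, hc]
  ring
end

section
/- Composition fairness bound for conjunction: suppose for each entity i the classification errors bᵢ¹ of predicate P¹ lie in [B̲¹, B̲¹ + α₁] and bᵢ² of predicate P² lie in [B̲², B̲² + α₂], all contained in [0, 1/2], and the error of the conjunction for entity i lies between bᵢ¹·bᵢ² and bᵢ¹ + bᵢ² − bᵢ¹·bᵢ². Then the difference between the maximum and minimum conjunction errors over all entities is at most α₁ + B̲¹ + α₂ + B̲² − (α₁ + B̲¹)(α₂ + B̲²) − B̲¹·B̲². -/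
theorem conjunction_composition_fairness_bound
    {ι : Type*} [Fintype ι] [Nonempty ι]
    (B1 B2 α1 α2 : ℝ)
    (hB1 : 0 ≤ B1) (hB2 : 0 ≤ B2) (hα1 : 0 ≤ α1) (hα2 : 0 ≤ α2)
    (h1half : B1 + α1 ≤ 1/2) (h2half : B2 + α2 ≤ 1/2)
    (b1 b2 e : ι → ℝ)
    (hb1 : ∀ i, b1 i ∈ Set.Icc B1 (B1 + α1))
    (hb2 : ∀ i, b2 i ∈ Set.Icc B2 (B2 + α2))
    (he : ∀ i, b1 i * b2 i ≤ e i ∧ e i ≤ b1 i + b2 i - b1 i * b2 i) :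
    (⨆ i, e i) - (⨅ i, e i) ≤
      α1 + B1 + α2 + B2 - (α1 + B1) * (α2 + B2) - B1 * B2 := by
  have hU : ∀ i, e i ≤ (B1 + α1) + (B2 + α2) - (B1 + α1) * (B2 + α2) := by
    intro i
    obtain ⟨l1, u1⟩ := hb1 i
    obtain ⟨l2, u2⟩ := hb2 i
    have h := (he i).2
    nlinarith [mul_nonneg (sub_nonneg.2 u1) (sub_nonneg.2 u2),
      mul_nonneg hB1 hB2]
  have hL : ∀ i, B1 * B2 ≤ e i := by
    intro i
    obtain ⟨l1, u1⟩ := hb1 i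
    obtain ⟨l2, u2⟩ := hb2 i
    have h := (he i).1
    nlinarith [mul_nonneg hB1 hB2]
  have hs : (⨆ i, e i) ≤ (B1 + α1) + (B2 + α2) - (B1 + α1) * (B2 + α2) :=
    ciSup_le hU
  have hi : B1 * B2 ≤ ⨅ i, e i := le_ciInf hL
  nlinarith [hs, hi]
end

section
/- Composition fairness bound for XOR: suppose for each entity i the error of the XOR predicate equals bᵢ¹ + bᵢ² − 2·bᵢ¹·bᵢ², where bᵢ¹ ∈ [B̲¹, B̲¹ + α₁] ⊆ [0, 1/2] and bᵢ² ∈ [B̲², B̲² + α₂] ⊆ [0, 1/2]. Then the difference between the maximum and minimum XOR errors over entities is at most α₁(1 − 2B̲²) + α₂(1 − 2B̲¹) − 2α₁α₂. In particular, if α₁ = α₂ = 0 then the XOR error is identical across all entities. -/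
theorem xor_composition_fairness_bound
    {ι : Type*} [Fintype ι] [Nonempty ι]
    (B1 B2 α1 α2 : ℝ)
    (hB1 : 0 ≤ B1) (hB2 : 0 ≤ B2) (hα1 : 0 ≤ α1) (hα2 : 0 ≤ α2)
    (h1half : B1 + α1 ≤ 1/2) (h2half : B2 + α2 ≤ 1/2)
    (b1 b2 e : ι → ℝ)
    (hb1 : ∀ i, b1 i ∈ Set.Icc B1 (B1 + α1))
    (hb2 : ∀ i, b2 i ∈ Set.Icc B2 (B2 + α2))
    (he : ∀ i, e i = b1 i + b2 i - 2 * b1 i * b2 i) :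
    ((⨆ i, e i) - (⨅ i, e i) ≤
      α1 * (1 - 2 * B2) + α2 * (1 - 2 * B1) - 2 * α1 * α2) ∧
    (α1 = 0 → α2 = 0 → ∀ i j, e i = e j) := by
  have hub : ∀ i, e i ≤ (B1 + α1) + (B2 + α2) - 2 * (B1 + α1) * (B2 + α2) := by
    intro i
    obtain ⟨h1l, h1u⟩ := hb1 i
    obtain ⟨h2l, h2u⟩ := hb2 i
    rw [he i]
    nlinarith [mul_nonneg hα1 hα2]
  have hlb : ∀ i, B1 + B2 - 2 * B1 * B2 ≤ e i := by
    intro i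
    obtain ⟨h1l, h1u⟩ := hb1 i
    obtain ⟨h2l, h2u⟩ := hb2 i
    rw [he i]
    nlinarith
  constructor
  · have hsup : (⨆ i, e i) ≤ (B1 + α1) + (B2 + α2) - 2 * (B1 + α1) * (B2 + α2) :=
      ciSup_le hub
    have hinf : B1 + B2 - 2 * B1 * B2 ≤ (⨅ i, e i) :=
      le_ciInf hlb
    nlinarith
  · intro h1 h2 i j
    subst h1; subst h2
    have hi := hub i
    have hi' := hlb i
    have hj := hub j
    have hj' := hlb j
    simp only [add_zero] at hi hj
    linarith
end

section
/- Sensitivity of the normalized weighted-count query: let a₁,…,aₙ > 0 with a_max = maxᵢ aᵢ, and suppose datasets x, x' ∈ ℕⁿ differ in exactly one coordinate i with x'ᵢ = xᵢ − 1, and both Σⱼ aⱼxⱼ ≥ L > a_max and Σⱼ aⱼx'ⱼ ≥ L − a_max > 0. Define Pₖ(x) = aₖxₖ / (Σⱼ aⱼxⱼ). Then Σₖ |Pₖ(x) − Pₖ(x')| ≤ 2·a_max / L. -/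
theorem allotment_query_sensitivity
    {n : ℕ} (a : Fin n → ℝ) (ha : ∀ j, 0 < a j)
    (hne : (Finset.univ : Finset (Fin n)).Nonempty)
    (amax : ℝ) (hamax : amax = Finset.univ.sup' hne a)
    (x x' : Fin n → ℕ) (i : Fin n) (hxi : 1 ≤ x i)
    (hxi' : (x' i : ℤ) = (x i : ℤ) - 1) (hxj : ∀ j, j ≠ i → x' j = x j)
    (L : ℝ) (hL : amax < L) (hZ : L ≤ ∑ j, a j * (x j : ℝ))
    (hL' : 0 < L - amax) (hZ' : L - amax ≤ ∑ j, a j * (x' j : ℝ)) :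
    ∑ k, |a k * (x k : ℝ) / (∑ j, a j * (x j : ℝ)) -
          a k * (x' k : ℝ) / (∑ j, a j * (x' j : ℝ))| ≤ 2 * amax / L := by
  set Z := ∑ j, a j * (x j : ℝ) with hZdef
  set Z' := ∑ j, a j * (x' j : ℝ) with hZ'def
  have hai_le : a i ≤ amax := hamax ▸ Finset.le_sup' a (Finset.mem_univ i)
  have hapos : 0 < amax := lt_of_lt_of_le (ha i) hai_le
  have hLpos : 0 < L := hapos.trans hL
  have hZpos : 0 < Z := hLpos.trans_le hZ
  have hZ'pos : 0 < Z' := hL'.trans_le hZ'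
  have hxi'' : (x' i : ℝ) = (x i : ℝ) - 1 := by exact_mod_cast hxi'
  have hxiR : (1 : ℝ) ≤ (x i : ℝ) := by exact_mod_cast hxi
  have hZZ' : Z' = Z - a i := by
    have h1 : Z - Z' = a i := by
      rw [hZdef, hZ'def, ← Finset.sum_sub_distrib, Finset.sum_eq_single i]
      · rw [hxi'']; ring
      · intro b _ hb; rw [hxj b hb]; ring
      · intro h; exact absurd (Finset.mem_univ i) h
    linarith
  have haix : a i * (x i : ℝ) ≤ Z :=
    Finset.single_le_sum (f := fun j => a j * (x j : ℝ)) (fun j _ => mul_nonneg (ha j).le (Nat.cast_nonneg _)) (Finset.mem_univ i)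
  have hterm : ∀ k ∈ Finset.univ.erase i,
      |a k * (x k : ℝ) / Z - a k * (x' k : ℝ) / Z'|
        = a k * (x k : ℝ) * a i / (Z * Z') := by
    intro k hk
    rw [hxj k (Finset.ne_of_mem_erase hk),
      div_sub_div _ _ hZpos.ne' hZ'pos.ne', abs_div,
      abs_of_pos (mul_pos hZpos hZ'pos)]
    congr 1
    rw [hZZ', abs_of_nonpos (by nlinarith [mul_nonneg (mul_nonneg (ha k).le (Nat.cast_nonneg (x k) : (0:ℝ) ≤ (x k : ℝ))) (ha i).le])]
    ring
  have htermi : |a i * (x i : ℝ) / Z - a i * (x' i : ℝ) / Z'|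
      = a i * (Z - a i * (x i : ℝ)) / (Z * Z') := by
    rw [hxi'', div_sub_div _ _ hZpos.ne' hZ'pos.ne', abs_div,
      abs_of_pos (mul_pos hZpos hZ'pos)]
    congr 1
    rw [hZZ', abs_of_nonneg (by nlinarith [ha i])]
    ring
  rw [← Finset.add_sum_erase _ _ (Finset.mem_univ i), htermi,
    Finset.sum_congr rfl hterm]
  have hsum_erase : ∑ k ∈ Finset.univ.erase i, a k * (x k : ℝ)
      = Z - a i * (x i : ℝ) := by
    have := Finset.add_sum_erase Finset.univ (fun j => a j * (x j : ℝ))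
      (Finset.mem_univ i)
    rw [hZdef]; linarith
  have hsum2 : ∑ k ∈ Finset.univ.erase i, a k * (x k : ℝ) * a i / (Z * Z')
      = (Z - a i * (x i : ℝ)) * a i / (Z * Z') := by
    rw [← Finset.sum_div, ← Finset.sum_mul, hsum_erase]
  rw [hsum2]
  set S := Z - a i * (x i : ℝ) with hSdef
  have hSnn : 0 ≤ S := by linarith
  have hSle : S ≤ Z' := by
    rw [hZZ']
    nlinarith [ha i]
  have key : 2 * (a i * S) / (Z * Z') ≤ 2 * amax / L := by
    rw [div_le_div_iff₀ (by positivity) hLpos]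
    have h1 : a i * S ≤ amax * Z' := mul_le_mul hai_le hSle hSnn hapos.le
    have h2 : (a i * S) * L ≤ (amax * Z') * Z :=
      mul_le_mul h1 hZ hLpos.le (by positivity)
    nlinarith [h2]
  have heq : a i * S / (Z * Z') + S * a i / (Z * Z') = 2 * (a i * S) / (Z * Z') := by
    ring
  linarith [key, heq.le]
end
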